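/- (Content of Lemma 3.1 of the paper, 'lemma on finite groups', in filtration form.) Let K be a field of characteristic p > 0, let Γ be a finitely generated group, let V be a finite-dimensional K-vector space, and let ρ : Γ → GL(V) be a representation. Suppose there exists a finite chain of K-subspaces 0 = V₀ ⊆ V₁ ⊆ ⋯ ⊆ V_m = V, each of which is invariant under ρ(γ) for every γ ∈ Γ, such that for each i the induced representation of Γ on the quotient V_{i+1}/V_i has finite image. Then the image ρ(Γ) is a finite group. (In the paper this is stated as: a representation of a finitely generated group over a field of positive characteristic whose semisimplification has finite image itself has finite image.) -/

import Mathlib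

/-- If `f` has finite range and `f` determines `g`, then `g` has finite range. -/
private lemma finite_range_of_factor {Γ α β : Type*} (f : Γ → α) (g : Γ → β)
    (hf : (Set.range f).Finite) (h : ∀ γ δ : Γ, f γ = f δ → g γ = g δ) :
    (Set.range g).Finite := by
  haveI := hf.to_subtype
  have hsurj : Function.Surjective
      (fun x : Set.range f => (⟨g x.2.choose, Set.mem_range_self _⟩ : Set.range g)) := by
    rintro ⟨-, γ, rfl⟩
    refine ⟨⟨f γ, γ, rfl⟩, ?_⟩
    exact Subtype.ext (h _ _ (⟨f γ, ⟨γ, rfl⟩⟩ : Set.range f).2.choose_spec)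
  have : Finite (Set.range g) := Finite.of_surjective _ hsurj
  exact Set.finite_coe_iff.mp this

/-- If a map with finite range separates the cosets of `H`, then `Γ ⧸ H` is finite. -/
private lemma finite_quotient_of_factor {Γ α : Type*} [Group Γ] (H : Subgroup Γ) (f : Γ → α)
    (hf : (Set.range f).Finite) (h : ∀ γ δ : Γ, f γ = f δ → γ⁻¹ * δ ∈ H) :
    Finite (Γ ⧸ H) := by
  have hfin : (Set.range (fun γ : Γ => (QuotientGroup.mk γ : Γ ⧸ H))).Finite :=
    finite_range_of_factor f _ hf (fun γ δ hext => (QuotientGroup.eq).2 (h _ _ hext))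
  rw [Set.range_eq_univ.2 (fun q => ⟨q.out, q.out_eq⟩)] at hfin
  exact Set.finite_univ_iff.mp hfin

/-- A "crossed-homomorphism-free" version: a genuine additive-valued homomorphism from a
finitely generated group into a `p`-torsion abelian group has finite range. -/
private lemma finite_range_of_addhom {Γ : Type*} [Group Γ] [Group.FG Γ] {p : ℕ} (hp : p ≠ 0)
    {A : Type*} [AddCommGroup A] (f : Γ → A) (hmul : ∀ γ δ, f (γ * δ) = f γ + f δ)
    (htor : ∀ a : A, p • a = 0) : (Set.range f).Finite := by
  have h1 : f 1 = 0 := by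
    have := hmul 1 1
    rw [mul_one] at this
    exact left_eq_add.mp this
  let φ : Γ →* Multiplicative A :=
    { toFun := fun γ => Multiplicative.ofAdd (f γ)
      map_one' := by simp [h1]
      map_mul' := fun γ δ => by simp [hmul] }
  have htor' : Monoid.IsTorsion φ.range := by
    intro x
    rw [isOfFinOrder_iff_pow_eq_one]
    refine ⟨p, Nat.pos_of_ne_zero hp, ?_⟩
    ext
    show ((x : Multiplicative A) ^ p : Multiplicative A) = 1
    have : ((x : Multiplicative A) ^ p).toAdd = p • (x : Multiplicative A).toAdd := rfl
    rw [← Multiplicative.toAdd.injective.eq_iff, this, htor]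
    rfl
  have hfin : Finite φ.range := CommGroup.finite_of_fg_torsion _ htor'
  have : (Set.range φ).Finite := by
    have := Set.finite_coe_iff.mp hfin
    simpa [MonoidHom.coe_range] using this
  have : (Multiplicative.toAdd '' Set.range φ).Finite := this.image _
  refine this.subset ?_
  rintro - ⟨γ, rfl⟩
  exact ⟨φ γ, ⟨γ, rfl⟩, rfl⟩

/-- Key inductive lemma: given an invariant chain `W 0 ⊆ ⋯ ⊆ W m` (not necessarily starting at
`⊥` or ending at `⊤`) whose successive quotient actions have finite image, the map
`γ ↦ (mk ∘ ρ γ : W m → V ⧸ W 0)` has finite range. -/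
private lemma aux_filtration {K : Type*} [Field K] {p : ℕ} (hp : p ≠ 0) [CharP K p] :
    ∀ (m : ℕ) (Γ : Type*) [Group Γ] [Group.FG Γ] (V : Type*) [AddCommGroup V] [Module K V]
      (ρ : Γ →* (V ≃ₗ[K] V)) (W : Fin (m + 1) → Submodule K V)
      (_hinv : ∀ (γ : Γ) (i : Fin (m + 1)), ∀ v ∈ W i, ρ γ v ∈ W i)
      (_hquot : ∀ i : Fin m, (Set.range (fun γ : Γ => fun v : W i.succ =>
        (Submodule.Quotient.mk (ρ γ v) : V ⧸ W i.castSucc))).Finite),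
      (Set.range (fun γ : Γ => fun v : W (Fin.last m) =>
        (Submodule.Quotient.mk (ρ γ v) : V ⧸ W 0))).Finite := by
  intro m
  induction m with
  | zero =>
    intro Γ _ _ V _ _ ρ W hinv _hquot
    have : Set.range (fun γ : Γ => fun v : W (Fin.last 0) =>
        (Submodule.Quotient.mk (ρ γ v) : V ⧸ W 0)) ⊆
        {fun v : W (Fin.last 0) => (0 : V ⧸ W 0)} := by
      rintro - ⟨γ, rfl⟩
      refine Set.mem_singleton_iff.mpr (funext fun v => ?_)
      rw [Submodule.Quotient.mk_eq_zero]
      have h0 : Fin.last 0 = (0 : Fin (0+1)) := by decide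
      exact h0 ▸ hinv γ (Fin.last 0) v v.2
    exact (Set.finite_singleton _).subset this
  | succ m IH =>
    intro Γ _ _ V _ _ ρ W hinv hquot
    have mulApply : ∀ (e f : V ≃ₗ[K] V) (v : V), (e * f) v = e (f v) := fun _ _ _ => rfl
    -- the action of `Γ` on `W pen` modulo `W 0` has finite range, by induction
    have hIH : (Set.range (fun γ : Γ => fun v : W ((Fin.last m).castSucc) =>
        (Submodule.Quotient.mk (ρ γ v) : V ⧸ W 0))).Finite := by
      have := IH Γ V ρ (fun i => W i.castSucc)
        (fun γ i => hinv γ i.castSucc)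
        (fun i => by rw [← Fin.succ_castSucc]; exact hquot i.castSucc)
      simpa using this
    -- the action of `Γ` on `W top` modulo `W pen` has finite range, by hypothesis
    have htop : (Set.range (fun γ : Γ => fun v : W (Fin.last (m + 1)) =>
        (Submodule.Quotient.mk (ρ γ v) : V ⧸ W ((Fin.last m).castSucc)))).Finite := by
      have := hquot (Fin.last m)
      rwa [Fin.succ_last] at this
    -- the subgroup acting trivially on `W top ⧸ W pen` and on `W pen ⧸ W 0`
    set T : Fin (m + 2) := Fin.last (m + 1) with hT
    set P : Fin (m + 2) := (Fin.last m).castSucc with hP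
    let H : Subgroup Γ :=
      { carrier := {γ | (∀ v ∈ W T, ρ γ v - v ∈ W P) ∧ (∀ v ∈ W P, ρ γ v - v ∈ W 0)}
        one_mem' := by simp
        mul_mem' := by
          rintro γ δ ⟨hγ1, hγ2⟩ ⟨hδ1, hδ2⟩
          constructor
          · intro v hv
            have e : ρ (γ * δ) v - v = (ρ γ (ρ δ v) - ρ δ v) + (ρ δ v - v) := by
              rw [map_mul, mulApply]; abel
            rw [e]
            exact (W P).add_mem (hγ1 _ (hinv δ T v hv)) (hδ1 v hv)
          · intro v hv
            have e : ρ (γ * δ) v - v = (ρ γ (ρ δ v) - ρ δ v) + (ρ δ v - v) := by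
              rw [map_mul, mulApply]; abel
            rw [e]
            exact (W 0).add_mem (hγ2 _ (hinv δ P v hv)) (hδ2 v hv)
        inv_mem' := by
          rintro γ ⟨hγ1, hγ2⟩
          constructor
          · intro v hv
            have e : ρ γ⁻¹ v - v = -(ρ γ (ρ γ⁻¹ v) - ρ γ⁻¹ v) := by
              rw [show ρ γ (ρ γ⁻¹ v) = v from by rw [← mulApply, ← map_mul, mul_inv_cancel, map_one]; rfl]
              abel
            rw [e]
            exact (W P).neg_mem (hγ1 _ (hinv γ⁻¹ T v hv))
          · intro v hv
            have e : ρ γ⁻¹ v - v = -(ρ γ (ρ γ⁻¹ v) - ρ γ⁻¹ v) := by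
              rw [show ρ γ (ρ γ⁻¹ v) = v from by rw [← mulApply, ← map_mul, mul_inv_cancel, map_one]; rfl]
              abel
            rw [e]
            exact (W 0).neg_mem (hγ2 _ (hinv γ⁻¹ P v hv)) }
    -- H has finite index
    have hHfin : Finite (Γ ⧸ H) := by
      refine finite_quotient_of_factor H
        (fun γ : Γ => ((fun v : W T => (Submodule.Quotient.mk (ρ γ v) : V ⧸ W P)),
          (fun v : W P => (Submodule.Quotient.mk (ρ γ v) : V ⧸ W 0)))) ?_ ?_
      · refine ((htop.prod hIH).subset ?_)
        rintro - ⟨γ, rfl⟩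
        exact ⟨⟨γ, rfl⟩, ⟨γ, rfl⟩⟩
      · intro γ δ hfd
        have h1 := congrArg Prod.fst hfd
        have h2 := congrArg Prod.snd hfd
        constructor
        · intro v hv
          have := congrFun h1 ⟨v, hv⟩
          have hmem : ρ γ v - ρ δ v ∈ W P := (Submodule.Quotient.eq _).1 this
          have e : ρ (γ⁻¹ * δ) v - v = -(ρ γ⁻¹ (ρ γ v - ρ δ v)) := by
            rw [map_sub, map_mul, mulApply,
              show ρ γ⁻¹ (ρ γ v) = v from by rw [← mulApply, ← map_mul, inv_mul_cancel, map_one]; rfl]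
            abel
          rw [e]
          exact (W P).neg_mem (hinv γ⁻¹ P _ hmem)
        · intro v hv
          have := congrFun h2 ⟨v, hv⟩
          have hmem : ρ γ v - ρ δ v ∈ W 0 := (Submodule.Quotient.eq _).1 this
          have e : ρ (γ⁻¹ * δ) v - v = -(ρ γ⁻¹ (ρ γ v - ρ δ v)) := by
            rw [map_sub, map_mul, mulApply,
              show ρ γ⁻¹ (ρ γ v) = v from by rw [← mulApply, ← map_mul, inv_mul_cancel, map_one]; rfl]
            abel
          rw [e]
          exact (W 0).neg_mem (hinv γ⁻¹ 0 _ hmem)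
    haveI : H.FiniteIndex := Subgroup.finiteIndex_of_finite_quotient
    haveI : Group.FG H := H.fg_of_index_ne_zero
    -- on H, the map `γ ↦ (v ↦ mk (ρ γ v - v))` is an additive homomorphism
    have hn : (Set.range (fun γ : H => fun v : W T =>
        (Submodule.Quotient.mk (ρ (γ : Γ) v - v) : V ⧸ W 0))).Finite := by
      refine finite_range_of_addhom hp _ ?_ ?_
      · intro γ δ
        funext v
        show (Submodule.Quotient.mk (ρ ((γ : Γ) * (δ : Γ)) v - v) : V ⧸ W 0) = _
        have hu : (ρ (δ : Γ) v - v : V) ∈ W P := δ.2.1 v v.2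
        have e : ρ ((γ : Γ) * (δ : Γ)) v - v =
            ((ρ (γ : Γ) v - v) + (ρ (δ : Γ) v - v)) + (ρ (γ : Γ) (ρ (δ : Γ) v - v) - (ρ (δ : Γ) v - v)) := by
          rw [map_mul, mulApply, map_sub]
          abel
        rw [e, Submodule.Quotient.mk_add, Submodule.Quotient.mk_add]
        have : (Submodule.Quotient.mk (ρ (γ : Γ) (ρ (δ : Γ) v - v) - (ρ (δ : Γ) v - v)) : V ⧸ W 0) = 0 :=
          (Submodule.Quotient.mk_eq_zero _).2 (γ.2.2 _ hu)
        rw [this, add_zero]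
        rfl
      · intro a
        funext v
        show p • a v = 0
        rw [← Nat.cast_smul_eq_nsmul K p (a v), CharP.cast_eq_zero K p, zero_smul]
    -- hence the action of H on `W T` modulo `W 0` has finite range
    have hHtop : (Set.range (fun γ : H => fun v : W T =>
        (Submodule.Quotient.mk (ρ (γ : Γ) v) : V ⧸ W 0))).Finite := by
      refine finite_range_of_factor _ _ hn ?_
      intro γ δ h
      funext v
      have := congrFun h v
      have e : ∀ (g : Γ), (Submodule.Quotient.mk (ρ g v) : V ⧸ W 0) =
          Submodule.Quotient.mk (v : V) + Submodule.Quotient.mk (ρ g v - v) := by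
        intro g
        rw [← Submodule.Quotient.mk_add, add_sub_cancel]
      rw [e, e, this]
    -- assemble: the full range over Γ is finite
    refine finite_range_of_factor
      (fun γ : Γ => ((QuotientGroup.mk γ : Γ ⧸ H),
        (fun v : W T => (Submodule.Quotient.mk
          (ρ ((QuotientGroup.mk γ : Γ ⧸ H).out⁻¹ * γ) v) : V ⧸ W 0)))) _ ?_ ?_
    · have hmemH : ∀ γ : Γ, ((QuotientGroup.mk γ : Γ ⧸ H).out⁻¹ * γ) ∈ H := by
        intro γ
        have : (QuotientGroup.mk ((QuotientGroup.mk γ : Γ ⧸ H).out) : Γ ⧸ H) = QuotientGroup.mk γ :=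
          QuotientGroup.out_eq' _
        exact (QuotientGroup.eq).1 this
      refine ((Set.finite_univ.prod hHtop).subset ?_)
      rintro - ⟨γ, rfl⟩
      exact ⟨trivial, ⟨⟨_, hmemH γ⟩, rfl⟩⟩
    · intro γ δ h
      have h1 : (QuotientGroup.mk γ : Γ ⧸ H) = QuotientGroup.mk δ := congrArg Prod.fst h
      have h2 := congrArg Prod.snd h
      funext v
      set o : Γ := (QuotientGroup.mk γ : Γ ⧸ H).out with ho
      have hδo : (QuotientGroup.mk δ : Γ ⧸ H).out = o := by rw [← h1]
      have key : ∀ g : Γ, (Submodule.Quotient.mk (ρ g v) : V ⧸ W 0) =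
          Submodule.Quotient.mk (ρ o (ρ (o⁻¹ * g) v)) := by
        intro g
        rw [← mulApply, ← map_mul, mul_inv_cancel_left]
      rw [key γ, key δ]
      have hcf := congrFun h2 v
      replace hcf : (Submodule.Quotient.mk (ρ ((Quotient.out (QuotientGroup.mk γ : Γ ⧸ H))⁻¹ * γ) v) : V ⧸ W 0) =
          Submodule.Quotient.mk (ρ ((Quotient.out (QuotientGroup.mk δ : Γ ⧸ H))⁻¹ * δ) v) := hcf
      rw [hδo, ← ho] at hcf
      have hmem : ρ (o⁻¹ * γ) v - ρ (o⁻¹ * δ) v ∈ W 0 := (Submodule.Quotient.eq _).1 hcf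
      refine (Submodule.Quotient.eq _).2 ?_
      rw [← map_sub]
      exact hinv o 0 _ hmem

/-- A representation of a finitely generated group over a field of positive
characteristic, admitting an invariant filtration `0 = V₀ ⊆ V₁ ⊆ ⋯ ⊆ V_m = V`
such that the induced representation on each successive quotient `V_{i+1}/V_i`
has finite image, itself has finite image.  (The finiteness of the image of the
induced representation on `V_{i+1}/V_i` is expressed by the existence of a
finite set `T ⊆ Γ` such that every `γ ∈ Γ` agrees with some `t ∈ T` on
`V_{i+1}` modulo `V_i`.) -/
theorem finite_image_of_filtration
    {K : Type*} [Field K] {p : ℕ} (hp : p ≠ 0) [CharP K p]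
    {Γ : Type*} [Group Γ] [Group.FG Γ]
    {V : Type*} [AddCommGroup V] [Module K V] [FiniteDimensional K V]
    (ρ : Γ →* (V ≃ₗ[K] V)) (m : ℕ) (W : Fin (m + 1) → Submodule K V)
    (hW0 : W 0 = ⊥) (hWtop : W (Fin.last m) = ⊤) (hmono : Monotone W)
    (hinv : ∀ (γ : Γ) (i : Fin (m + 1)), ∀ v ∈ W i, ρ γ v ∈ W i)
    (hquot : ∀ i : Fin m, ∃ T : Finset Γ, ∀ γ : Γ, ∃ t ∈ T,
      ∀ v ∈ W i.succ, ρ γ v - ρ t v ∈ W i.castSucc) :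
    Set.Finite (Set.range fun γ : Γ => ρ γ) := by
  have hquot' : ∀ i : Fin m, (Set.range (fun γ : Γ => fun v : W i.succ =>
      (Submodule.Quotient.mk (ρ γ v) : V ⧸ W i.castSucc))).Finite := by
    intro i
    obtain ⟨T, hT⟩ := hquot i
    refine (T.finite_toSet.image (fun t => fun v : W i.succ =>
      (Submodule.Quotient.mk (ρ t v) : V ⧸ W i.castSucc))).subset ?_
    rintro - ⟨γ, rfl⟩
    obtain ⟨t, ht, h⟩ := hT γ
    exact ⟨t, ht, (funext fun v : W i.succ => ((Submodule.Quotient.eq _).2 (h ↑v v.2))).symm⟩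
  have hfin := aux_filtration hp m Γ V ρ W hinv hquot'
  refine finite_range_of_factor _ _ hfin ?_
  intro γ δ h
  ext v
  have hv : v ∈ W (Fin.last m) := hWtop ▸ Submodule.mem_top
  have := congrFun h ⟨v, hv⟩
  have hmem : ρ γ v - ρ δ v ∈ W 0 := (Submodule.Quotient.eq _).1 this
  rw [hW0, Submodule.mem_bot, sub_eq_zero] at hmem
  exact hmem
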